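/- Let R be a unital associative ℝ-algebra and let w, v ∈ R satisfy the C_{L,a}-relations with a = 0, tr A = 0 and det A = −1, i.e. w²v = v w² and w v² = v² w. Set d = w·v and d̃ = v·w. Then for all r, s, t ∈ ℝ the element Ĉ_{r,s,t} = r•(d + d̃) + s•(d + d̃)² + t•(d − d̃)² commutes with both w and v: Ĉ_{r,s,t}·w = w·Ĉ_{r,s,t} and Ĉ_{r,s,t}·v = v·Ĉ_{r,s,t}. -/
import Mathlib


/-- when `a = 0`, `tr A = 0`, `det A = −1` (so the `C_{L,a}`-relations read
`w²v = v w²` and `w v² = v² w`), the element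
`Ĉ_{r,s,t} = r(d+d') + s(d+d')² + t(d−d')²` commutes with `w` and `v` for all `r, s, t`. -/
theorem stmt_5 (R : Type*) [Ring R] [Algebra ℝ R]
    (w v : R)
    (h1 : w * w * v = v * w * w)
    (h2 : w * v * v = v * v * w)
    (d d' : R) (hd : d = w * v) (hd' : d' = v * w) :
    ∀ r s t : ℝ,
      (r • (d + d') + s • (d + d') ^ 2 + t • (d - d') ^ 2) * w =
        w * (r • (d + d') + s • (d + d') ^ 2 + t • (d - d') ^ 2) ∧
      (r • (d + d') + s • (d + d') ^ 2 + t • (d - d') ^ 2) * v =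
        v * (r • (d + d') + s • (d + d') ^ 2 + t • (d - d') ^ 2) := by
  intro r s t
  subst hd hd'
  have hPw : (w * v + v * w) * w = w * (w * v + v * w) := by
    noncomm_ring
    rw [← mul_assoc v w w, ← h1, mul_assoc]
  have hPv : (w * v + v * w) * v = v * (w * v + v * w) := by
    noncomm_ring
    rw [← mul_assoc w v v, h2, mul_assoc]
    abel
  have hMw : (w * v - v * w) * w = -(w * (w * v - v * w)) := by
    noncomm_ring
    rw [← mul_assoc v w w, ← h1, mul_assoc]
  have hMv : (w * v - v * w) * v = -(v * (w * v - v * w)) := by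
    noncomm_ring
    rw [← mul_assoc w v v, h2, mul_assoc]
    abel
  have hP2w : (w * v + v * w) ^ 2 * w = w * (w * v + v * w) ^ 2 := by
    rw [sq, mul_assoc, hPw, ← mul_assoc, hPw, mul_assoc]
  have hP2v : (w * v + v * w) ^ 2 * v = v * (w * v + v * w) ^ 2 := by
    rw [sq, mul_assoc, hPv, ← mul_assoc, hPv, mul_assoc]
  have hM2w : (w * v - v * w) ^ 2 * w = w * (w * v - v * w) ^ 2 := by
    rw [sq, mul_assoc, hMw, mul_neg, ← mul_assoc, hMw, neg_mul, neg_neg, mul_assoc]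
  have hM2v : (w * v - v * w) ^ 2 * v = v * (w * v - v * w) ^ 2 := by
    rw [sq, mul_assoc, hMv, mul_neg, ← mul_assoc, hMv, neg_mul, neg_neg, mul_assoc]
  constructor <;>
    simp only [add_mul, mul_add, smul_mul_assoc, mul_smul_comm, hPw, hPv, hP2w, hP2v,
      hM2w, hM2v]
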